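/- Let X be a cluster-tilting subcategory of a triangulated category C with split idempotents. Then for every object A of C there exist an object X₁ ∈ X and a morphism α: Σ⁻¹X₁ → A in C whose class ᾱ is an epimorphism in the quotient category C/X. Consequently the abelian category C/X has enough projectives (it is projectively generated). -/

import Mathlib

open CategoryTheory CategoryTheory.Limits CategoryTheory.Pretriangulated

universe v u

variable {C : Type u} [Category.{v} C] [Preadditive C] [HasZeroObject C]
  [HasShift C ℤ] [∀ n : ℤ, (shiftFunctor C n).Additive] [Pretriangulated C]

/-- `f` factors through an object satisfying `X`. -/
def FactorsThru (X : C → Prop) {A B : C} (f : A ⟶ B) : Prop :=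
  ∃ (X₀ : C) (g : A ⟶ X₀) (h : X₀ ⟶ B), X X₀ ∧ g ≫ h = f

/-- The hom relation on `C` identifying two morphisms when their difference factors
through an object of `X`; the quotient category `C/X` is the quotient by this relation. -/
def homRelOf (X : C → Prop) : HomRel C :=
  fun {A B : C} (f g : A ⟶ B) => FactorsThru X (f - g)

/-- The additive quotient category `C/X`. -/
abbrev QuotCat (X : C → Prop) := CategoryTheory.Quotient (homRelOf X)

/-- The quotient functor `C ⥤ C/X`, sending a morphism `f` to its class `f̄`. -/
abbrev quotFunctor (X : C → Prop) : C ⥤ QuotCat X := Quotient.functor _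

/-- `X` is a full additive subcategory: it contains the zero objects and is closed under
isomorphisms, finite direct sums and direct summands. -/
structure IsAdditiveClosed (X : C → Prop) : Prop where
  zero : ∀ Z : C, IsZero Z → X Z
  iso : ∀ {A B : C}, (A ≅ B) → X A → X B
  biprod : ∀ {A B : C} (b : BinaryBicone A B), Nonempty b.IsBilimit → X A → X B → X b.pt
  summand : ∀ {A B : C} (i : A ⟶ B) (p : B ⟶ A), i ≫ p = 𝟙 A → X B → X A

/-- `X` is a cluster-tilting subcategory of the triangulated category `C`:
it is a full additive subcategory such that (i) `Hom(X₁, ΣX₂) = 0` for all `X₁, X₂ ∈ X`, and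
(ii) every object `A` fits into a distinguished triangle `X₀ ⟶ X₁ ⟶ A ⟶ ΣX₀` with
`X₀, X₁ ∈ X`. -/
structure IsClusterTilting (X : C → Prop) extends IsAdditiveClosed X : Prop where
  hom_shift_zero : ∀ {X₁ X₂ : C}, X X₁ → X X₂ → ∀ f : X₁ ⟶ X₂⟦(1 : ℤ)⟧, f = 0
  exists_triangle : ∀ A : C, ∃ (X₀ X₁ : C) (f : X₀ ⟶ X₁) (g : X₁ ⟶ A) (h : A ⟶ X₀⟦(1 : ℤ)⟧),
    X X₀ ∧ X X₁ ∧ Triangle.mk f g h ∈ distTriang C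

/-- `f : A ⟶ B` is `X`-monic: every morphism from `A` to an object of `X` factors through `f`. -/
def XMonic (X : C → Prop) {A B : C} (f : A ⟶ B) : Prop :=
  ∀ X' : C, X X' → ∀ u : A ⟶ X', ∃ v : B ⟶ X', f ≫ v = u

/-- `f : A ⟶ B` is `X`-epic: every morphism from an object of `X` to `B` factors through `f`. -/
def XEpic (X : C → Prop) {A B : C} (f : A ⟶ B) : Prop :=
  ∀ X' : C, X X' → ∀ u : X' ⟶ B, ∃ v : X' ⟶ A, v ≫ f = u

section AuxLemmas
open ZeroObject
variable {X : C → Prop}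

lemma hom_from_shiftneg_zero (hX : IsClusterTilting X) {X₁ X' : C} (h₁ : X X₁) (h' : X X')
    (f : X₁⟦(-1 : ℤ)⟧ ⟶ X') : f = 0 := by
  have hg : (shiftNegShift X₁ (1 : ℤ)).inv ≫ (shiftFunctor C (1 : ℤ)).map f = 0 :=
    hX.hom_shift_zero h₁ h' _
  apply (shiftFunctor C (1 : ℤ)).map_injective
  rw [Functor.map_zero]
  calc (shiftFunctor C (1 : ℤ)).map f
      = (shiftNegShift X₁ (1 : ℤ)).hom ≫ ((shiftNegShift X₁ (1 : ℤ)).inv ≫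
        (shiftFunctor C (1 : ℤ)).map f) := by simp
    _ = 0 := by rw [hg, comp_zero]

lemma congruence_homRelOf (hX : IsAdditiveClosed X) : Congruence (homRelOf X) where
  equivalence := by
    intro A B
    constructor
    · intro f
      exact ⟨0, 0, 0, hX.zero 0 (isZero_zero C), by simp⟩
    · rintro f g ⟨P, a, b, hP, hab⟩
      exact ⟨P, -a, b, hP, by rw [Preadditive.neg_comp, hab, neg_sub]⟩
    · rintro f g h ⟨P, a, b, hP, hab⟩ ⟨Q, c, d, hQ, hcd⟩
      refine ⟨P ⊞ Q, biprod.lift a c, biprod.desc b d,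
        hX.biprod _ ⟨BinaryBiproduct.isBilimit P Q⟩ hP hQ, ?_⟩
      rw [biprod.lift_desc, hab, hcd]
      abel
  comp_left := by
    rintro A B Z f g g' ⟨P, a, b, hP, hab⟩
    exact ⟨P, f ≫ a, b, hP, by rw [Category.assoc, hab, Preadditive.comp_sub]⟩
  comp_right := by
    rintro A B Z f f' g ⟨P, a, b, hP, hab⟩
    exact ⟨P, a, b ≫ g, hP, by rw [← Category.assoc, hab, Preadditive.sub_comp]⟩

end AuxLemmas

section Main
variable {X : C → Prop}

lemma epi_quot_map (hX : IsClusterTilting X) {X₀ X₁ A : C} (hX₀ : X X₀) (hX₁ : X X₁)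
    {f : X₀ ⟶ X₁} {g : X₁ ⟶ A⟦(1 : ℤ)⟧} {h : A⟦(1 : ℤ)⟧ ⟶ X₀⟦(1 : ℤ)⟧}
    (hT : Triangle.mk f g h ∈ distTriang C) :
    Epi ((quotFunctor X).map ((shiftFunctor C (-1 : ℤ)).map g ≫
      (shiftFunctorCompIsoId C (1 : ℤ) (-1 : ℤ) (add_neg_cancel 1)).hom.app A)) := by
  haveI := congruence_homRelOf hX.toIsAdditiveClosed
  set ι := shiftFunctorCompIsoId C (1 : ℤ) (-1 : ℤ) (add_neg_cancel 1) with hι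
  set α : X₁⟦(-1 : ℤ)⟧ ⟶ A := (shiftFunctor C (-1 : ℤ)).map g ≫ ι.hom.app A with hα
  constructor
  intro Z u v huv
  obtain ⟨Z⟩ := Z
  obtain ⟨u₀, rfl⟩ := (quotFunctor X).map_surjective u
  obtain ⟨v₀, rfl⟩ := (quotFunctor X).map_surjective v
  rw [← Functor.map_comp, ← Functor.map_comp, Quotient.functor_map_eq_iff] at huv
  obtain ⟨P, a, b, hP, hab⟩ := huv
  have ha : a = 0 := hom_from_shiftneg_zero hX hX₁ hP a
  set d : A ⟶ Z := u₀ - v₀ with hd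
  have hαd : α ≫ d = 0 := by
    rw [Preadditive.comp_sub, ← hab, ha, zero_comp]
  have hnat := ι.hom.naturality d
  dsimp only [Functor.comp_map, Functor.id_map] at hnat
  -- hnat : (shiftFunctor C (-1)).map ((shiftFunctor C 1).map d) ≫ ι.hom.app Z = ι.hom.app A ≫ d
  have h1 : (shiftFunctor C (-1 : ℤ)).map (g ≫ (shiftFunctor C (1 : ℤ)).map d) ≫
      ι.hom.app Z = 0 := by
    rw [Functor.map_comp, Category.assoc, hnat, ← Category.assoc]
    exact hαd
  have h2 : g ≫ (shiftFunctor C (1 : ℤ)).map d = 0 := by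
    apply (shiftFunctor C (-1 : ℤ)).map_injective
    rw [Functor.map_zero, ← cancel_mono (ι.hom.app Z), zero_comp]
    exact h1
  obtain ⟨t, ht⟩ := Triangle.yoneda_exact₃ _ hT ((shiftFunctor C (1 : ℤ)).map d) h2
  dsimp only [Triangle.mk] at ht t
  have hfact : FactorsThru X d := by
    refine ⟨(shiftFunctor C (-1 : ℤ)).obj ((shiftFunctor C (1 : ℤ)).obj X₀),
      ι.inv.app A ≫ (shiftFunctor C (-1 : ℤ)).map h,
      (shiftFunctor C (-1 : ℤ)).map t ≫ ι.hom.app Z,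
      hX.iso (shiftShiftNeg X₀ (1 : ℤ)).symm hX₀, ?_⟩
    simp only [Category.assoc]
    rw [← Functor.map_comp_assoc, ← ht, hnat, Iso.inv_hom_id_app_assoc]
  rw [Quotient.functor_map_eq_iff]
  exact hfact

lemma projective_quot (hX : IsClusterTilting X) {X₁ : C} (hX₁ : X X₁) :
    Projective ((quotFunctor X).obj (X₁⟦(-1 : ℤ)⟧)) := by
  haveI := congruence_homRelOf hX.toIsAdditiveClosed
  constructor
  intro E Y fq eq heq
  obtain ⟨E⟩ := E; obtain ⟨Y⟩ := Y
  obtain ⟨e₀, rfl⟩ := (quotFunctor X).map_surjective eq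
  obtain ⟨f₀, rfl⟩ := (quotFunctor X).map_surjective fq
  obtain ⟨Z, u, w, hT⟩ := Pretriangulated.distinguished_cocone_triangle e₀
  have heu : e₀ ≫ u = 0 := comp_distTriang_mor_zero₁₂ _ hT
  have h1 : (quotFunctor X).map u = (quotFunctor X).map (0 : Y ⟶ Z) := by
    rw [← cancel_epi ((quotFunctor X).map e₀), ← Functor.map_comp, ← Functor.map_comp,
      heu, comp_zero]
  rw [Quotient.functor_map_eq_iff] at h1
  obtain ⟨P, p, q, hP, hpq⟩ := h1
  rw [sub_zero] at hpq
  have hfp : f₀ ≫ p = 0 := hom_from_shiftneg_zero hX hX₁ hP _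
  have hfu : f₀ ≫ u = 0 := by rw [← hpq, ← Category.assoc, hfp, zero_comp]
  obtain ⟨k, hk⟩ := Triangle.coyoneda_exact₂ _ hT f₀ hfu
  dsimp only [Triangle.mk] at hk k
  exact ⟨(quotFunctor X).map k, by rw [← Functor.map_comp, ← hk]⟩

end Main

/-- For every object `A` of `C` there are `X₁ ∈ X` and a morphism
`α : Σ⁻¹X₁ ⟶ A` whose class is an epimorphism in `C/X`; moreover `Σ⁻¹X₁` is projective in
`C/X`, so the quotient category has enough projectives. -/
theorem enough_projectives [IsIdempotentComplete C]
    (X : C → Prop) (hX : IsClusterTilting X) (A : C) :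
    ∃ (X₁ : C) (α : X₁⟦(-1 : ℤ)⟧ ⟶ A), X X₁ ∧ Epi ((quotFunctor X).map α) ∧
      Projective ((quotFunctor X).obj (X₁⟦(-1 : ℤ)⟧)) := by
  obtain ⟨X₀, X₁, f, g, h, hX₀, hX₁, hT⟩ := hX.exists_triangle (A⟦(1 : ℤ)⟧)
  exact ⟨X₁, (shiftFunctor C (-1 : ℤ)).map g ≫
      (shiftFunctorCompIsoId C (1 : ℤ) (-1 : ℤ) (add_neg_cancel 1)).hom.app A,
    hX₁, epi_quot_map hX hX₀ hX₁ hT, projective_quot hX hX₁⟩
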